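/- Let T be the d-regular rooted tree, D ≥ 1, and P ≤ Aut(T^D) a minimal pattern subgroup with group of finite type G_P. Then for every n ≥ D, |π_n(G_P)| = |P| · |St_P(D−1)|^{d + d² + ⋯ + d^{n−D}}, where St_P(D−1) = π_D(St_{G_P}(D−1)). Consequently, the Hausdorff dimension of G_P is ℋ(G_P) = (1/d^{D−1}) · log|St_P(D−1)| / log(d!). -/

import Mathlib

namespace TreeFT

/-- Vertices of the `d`-regular rooted tree: finite words over `Fin d`. -/
abbrev Vertex (d : ℕ) := List (Fin d)

/-- The automorphism group of the `d`-regular rooted tree, realized as the subgroup of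
permutations of the vertex set that preserve length (levels) and prefixes (adjacency). -/
def treeAut (d : ℕ) : Subgroup (Equiv.Perm (Vertex d)) where
  carrier := {g | (∀ v : Vertex d, (g v).length = v.length) ∧
      (∀ v w : Vertex d, (g (v ++ w)).take v.length = g v)}
  one_mem' := ⟨fun _ => rfl, fun v w => List.take_left⟩
  mul_mem' := by
    rintro g h ⟨hg1, hg2⟩ ⟨hh1, hh2⟩
    refine ⟨fun v => by rw [Equiv.Perm.mul_apply, hg1, hh1], fun v w => ?_⟩
    have h1 : h (v ++ w) = h v ++ (h (v ++ w)).drop v.length := by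
      conv_lhs => rw [← List.take_append_drop v.length (h (v ++ w))]
      rw [hh2]
    rw [Equiv.Perm.mul_apply, Equiv.Perm.mul_apply, h1]
    have h2 : v.length = (h v).length := (hh1 v).symm
    rw [h2]
    exact hg2 _ _
  inv_mem' := by
    rintro g ⟨hg1, hg2⟩
    constructor
    · intro v
      have h := hg1 (g⁻¹ v)
      rw [(Equiv.Perm.eq_inv_iff_eq.mp rfl)] at h
      exact h.symm
    · intro v w
      apply g.injective
      have hlen : v.length ≤ (g⁻¹ (v ++ w)).length := by
        have h := hg1 (g⁻¹ (v ++ w))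
        rw [(Equiv.Perm.eq_inv_iff_eq.mp rfl)] at h
        rw [← h, List.length_append]
        exact Nat.le_add_right _ _
      have h3 := hg2 ((g⁻¹ (v ++ w)).take v.length) ((g⁻¹ (v ++ w)).drop v.length)
      rw [List.take_append_drop, (Equiv.Perm.eq_inv_iff_eq.mp rfl), List.length_take,
        min_eq_left hlen, List.take_left] at h3
      rw [← h3, (Equiv.Perm.eq_inv_iff_eq.mp rfl)]

variable {d : ℕ}

/-- `Aut(T)` as a type. -/
abbrev TAut (d : ℕ) := ↥(treeAut d)

lemma length_apply (g : TAut d) (v : Vertex d) :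
    ((g : Equiv.Perm (Vertex d)) v).length = v.length := g.2.1 v

lemma take_apply (g : TAut d) (v w : Vertex d) :
    ((g : Equiv.Perm (Vertex d)) (v ++ w)).take v.length = (g : Equiv.Perm (Vertex d)) v :=
  g.2.2 v w

lemma apply_append (g : TAut d) (v w : Vertex d) :
    (g : Equiv.Perm (Vertex d)) (v ++ w) =
      (g : Equiv.Perm (Vertex d)) v ++ ((g : Equiv.Perm (Vertex d)) (v ++ w)).drop v.length := by
  conv_lhs => rw [← List.take_append_drop v.length ((g : Equiv.Perm (Vertex d)) (v ++ w))]
  rw [take_apply]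

/-- The section `g|_v` of a tree automorphism at the vertex `v`. -/
def sect (g : TAut d) (v : Vertex d) : TAut d :=
  ⟨{ toFun := fun w => ((g : Equiv.Perm (Vertex d)) (v ++ w)).drop v.length
     invFun := fun w =>
       (((g : Equiv.Perm (Vertex d)))⁻¹ ((g : Equiv.Perm (Vertex d)) v ++ w)).drop v.length
     left_inv := by
       intro w
       show ((g : Equiv.Perm (Vertex d))⁻¹
         ((g : Equiv.Perm (Vertex d)) v ++
           ((g : Equiv.Perm (Vertex d)) (v ++ w)).drop v.length)).drop v.length = w
       rw [← apply_append g v w, (Equiv.Perm.inv_eq_iff_eq.mpr rfl), List.drop_left]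
     right_inv := by
       intro w
       show ((g : Equiv.Perm (Vertex d))
         (v ++ ((g : Equiv.Perm (Vertex d))⁻¹
           ((g : Equiv.Perm (Vertex d)) v ++ w)).drop v.length)).drop v.length = w
       have h2 := apply_append g⁻¹ ((g : Equiv.Perm (Vertex d)) v) w
       simp only [InvMemClass.coe_inv] at h2
       rw [(Equiv.Perm.inv_eq_iff_eq.mpr rfl), length_apply] at h2
       rw [← h2, (Equiv.Perm.eq_inv_iff_eq.mp rfl), ← length_apply g v, List.drop_left] },
   by
    constructor
    · intro w
      simp only [Equiv.coe_fn_mk, List.length_drop, length_apply, List.length_append]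
      omega
    · intro w u
      simp only [Equiv.coe_fn_mk]
      rw [← List.append_assoc]
      have h0 : ((g : Equiv.Perm (Vertex d)) ((v ++ w) ++ u)).take (v ++ w).length
          = (g : Equiv.Perm (Vertex d)) (v ++ w) := take_apply g (v ++ w) u
      have h1 : w.length = (v.length + w.length) - v.length := by omega
      rw [h1, ← List.drop_take, ← List.length_append, h0]⟩

lemma sect_apply (g : TAut d) (v w : Vertex d) :
    ((sect g v : TAut d) : Equiv.Perm (Vertex d)) w
      = ((g : Equiv.Perm (Vertex d)) (v ++ w)).drop v.length := rfl

lemma sect_mul (g h : TAut d) (v : Vertex d) :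
    sect (g * h) v = sect g ((h : Equiv.Perm (Vertex d)) v) * sect h v := by
  apply Subtype.ext
  apply Equiv.ext
  intro w
  simp only [MulMemClass.coe_mul, Equiv.Perm.mul_apply, sect_apply]
  rw [← apply_append h v w, length_apply]

lemma sect_one (v : Vertex d) : sect (1 : TAut d) v = 1 := by
  apply Subtype.ext
  apply Equiv.ext
  intro w
  simp only [sect_apply, OneMemClass.coe_one, Equiv.Perm.coe_one, id_eq]
  exact List.drop_left

end TreeFT
namespace TreeFT

variable {d : ℕ}

/-- The stabilizer `St(n)` of the `n`-th level: automorphisms acting trivially on the first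
`n` levels of the tree. -/
def lst (d n : ℕ) : Subgroup (TAut d) where
  carrier := {g | ∀ v : Vertex d, v.length ≤ n → (g : Equiv.Perm (Vertex d)) v = v}
  one_mem' := fun _ _ => rfl
  mul_mem' := by
    intro g h hg hh v hv
    show (g : Equiv.Perm (Vertex d)) ((h : Equiv.Perm (Vertex d)) v) = v
    rw [hh v hv, hg v hv]
  inv_mem' := by
    intro g hg v hv
    show ((g : Equiv.Perm (Vertex d)))⁻¹ v = v
    apply (g : Equiv.Perm (Vertex d)).injective
    rw [(Equiv.Perm.eq_inv_iff_eq.mp rfl), hg v hv]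

lemma mem_lst {g : TAut d} {n : ℕ} :
    g ∈ lst d n ↔ ∀ v : Vertex d, v.length ≤ n → (g : Equiv.Perm (Vertex d)) v = v :=
  Iff.rfl

instance lst_normal (d n : ℕ) : (lst d n).Normal := by
  constructor
  intro s hs g v hv
  show (g : Equiv.Perm (Vertex d))
    ((s : Equiv.Perm (Vertex d)) (((g : Equiv.Perm (Vertex d)))⁻¹ v)) = v
  have h1 : ((g⁻¹ : TAut d) : Equiv.Perm (Vertex d)) v = ((g : Equiv.Perm (Vertex d)))⁻¹ v := by
    simp
  have h2 : (((g : Equiv.Perm (Vertex d)))⁻¹ v).length ≤ n := by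
    rw [← h1, length_apply]; exact hv
  rw [hs _ h2, (Equiv.Perm.eq_inv_iff_eq.mp rfl)]

/-- `Aut(T^n)`, the automorphism group of the finite tree consisting of the first `n` levels,
realized as the quotient of `Aut(T)` by the `n`-th level stabilizer. -/
abbrev FAut (d n : ℕ) := TAut d ⧸ lst d n

/-- `π_n : Aut(T) → Aut(T^n)`, restriction to the first `n` levels. -/
def proj (d n : ℕ) : TAut d →* FAut d n := QuotientGroup.mk' (lst d n)

lemma proj_surjective (d n : ℕ) : Function.Surjective (proj d n) :=
  QuotientGroup.mk'_surjective _

/-- The group of finite type `G_P` of depth `D` with pattern group `P ≤ Aut(T^D)`: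
all tree automorphisms whose section at every vertex acts on the first `D` levels as an
element of `P`. -/
def gft (d D : ℕ) (P : Subgroup (FAut d D)) : Subgroup (TAut d) where
  carrier := {g | ∀ v : Vertex d, proj d D (sect g v) ∈ P}
  one_mem' := by
    intro v
    rw [sect_one, map_one]
    exact one_mem P
  mul_mem' := by
    intro g h hg hh v
    rw [sect_mul, map_mul]
    exact mul_mem (hg _) (hh _)
  inv_mem' := by
    intro g hg v
    have h2 : sect g (((g⁻¹ : TAut d) : Equiv.Perm (Vertex d)) v) * sect g⁻¹ v = 1 := by
      rw [← sect_mul, mul_inv_cancel, sect_one]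
    have h3 : sect g⁻¹ v = (sect g (((g⁻¹ : TAut d) : Equiv.Perm (Vertex d)) v))⁻¹ :=
      (inv_eq_of_mul_eq_one_right h2).symm
    rw [h3, map_inv]
    exact inv_mem (hg _)

lemma mem_gft {g : TAut d} {D : ℕ} {P : Subgroup (FAut d D)} :
    g ∈ gft d D P ↔ ∀ v : Vertex d, proj d D (sect g v) ∈ P := Iff.rfl

/-- `P ≤ Aut(T^D)` is a minimal pattern subgroup if `π_D(G_P) = P`. -/
def IsMinimalPattern (d D : ℕ) (P : Subgroup (FAut d D)) : Prop :=
  (gft d D P).map (proj d D) = P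

/-- A subgroup of `Aut(T)` is level-transitive if it acts transitively on every level. -/
def LevelTransitive (H : Subgroup (TAut d)) : Prop :=
  ∀ v w : Vertex d, v.length = w.length → ∃ g ∈ H, (g : Equiv.Perm (Vertex d)) v = w

/-- A subgroup of `Aut(T)` is self-similar if it contains all sections of its elements. -/
def SelfSimilar (H : Subgroup (TAut d)) : Prop :=
  ∀ g ∈ H, ∀ v : Vertex d, sect g v ∈ H

/-- A subgroup of `Aut(T)` is fractal if it is self-similar, level-transitive, and for every
vertex `v` the section map maps the stabilizer of `v` onto the whole group. -/
def Fractal (H : Subgroup (TAut d)) : Prop :=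
  SelfSimilar H ∧ LevelTransitive H ∧
    ∀ v : Vertex d, ∀ h ∈ H, ∃ k ∈ H, (k : Equiv.Perm (Vertex d)) v = v ∧ sect k v = h

/-- The geometric product `K_n` of `K` at level `n`: elements of `St(n)` all of whose sections
at level-`n` vertices lie in `K`. -/
def geom (K : Subgroup (TAut d)) (n : ℕ) : Subgroup (TAut d) where
  carrier := {g | g ∈ lst d n ∧ ∀ v : Vertex d, v.length = n → sect g v ∈ K}
  one_mem' := ⟨one_mem _, fun v _ => by rw [sect_one]; exact one_mem K⟩
  mul_mem' := by
    rintro g h ⟨hg1, hg2⟩ ⟨hh1, hh2⟩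
    refine ⟨mul_mem hg1 hh1, fun v hv => ?_⟩
    rw [sect_mul, hh1 v hv.le]
    exact mul_mem (hg2 v hv) (hh2 v hv)
  inv_mem' := by
    rintro g ⟨hg1, hg2⟩
    refine ⟨inv_mem hg1, fun v hv => ?_⟩
    have hfix : ((g⁻¹ : TAut d) : Equiv.Perm (Vertex d)) v = v :=
      (inv_mem hg1 : g⁻¹ ∈ lst d n) v hv.le
    have h2 : sect g v * sect g⁻¹ v = 1 := by
      have := sect_mul g g⁻¹ v
      rw [mul_inv_cancel, sect_one, hfix] at this
      exact this.symm
    rw [(inv_eq_of_mul_eq_one_right h2).symm]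
    exact inv_mem (hg2 v hv)

end TreeFT
namespace TreeFT

variable {d : ℕ}

/-- The congruence topology on `Aut(T)`: the topology of pointwise convergence on the vertex
set (each vertex set carrying the discrete topology); the level stabilizers `St(n)` form a
base of neighborhoods of the identity for it. -/
instance tautTopologicalSpace (d : ℕ) : TopologicalSpace (TAut d) :=
  TopologicalSpace.induced
    (fun g : TAut d => ((g : Equiv.Perm (Vertex d)) : Vertex d → Vertex d))
    (@Pi.topologicalSpace (Vertex d) (fun _ => Vertex d) (fun _ => ⊥))

lemma isOpen_eval (d : ℕ) (v u : Vertex d) :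
    IsOpen {g : TAut d | (g : Equiv.Perm (Vertex d)) v = u} := by
  letI : TopologicalSpace (Vertex d) := ⊥
  haveI : DiscreteTopology (Vertex d) := ⟨rfl⟩
  have h : IsOpen ((fun f : Vertex d → Vertex d => f v) ⁻¹' {u}) :=
    (continuous_apply (A := fun _ : Vertex d => Vertex d) v).isOpen_preimage ({u} : Set (Vertex d)) (isOpen_discrete _)
  exact isOpen_induced h

lemma isOpen_eval_mem (d : ℕ) (v : Vertex d) (s : Set (Vertex d)) :
    IsOpen {g : TAut d | (g : Equiv.Perm (Vertex d)) v ∈ s} := by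
  have h : {g : TAut d | (g : Equiv.Perm (Vertex d)) v ∈ s}
      = ⋃ u ∈ s, {g : TAut d | (g : Equiv.Perm (Vertex d)) v = u} := by
    ext g; simp
  rw [h]
  exact isOpen_biUnion fun u _ => isOpen_eval d v u

lemma continuous_into_vertex {X : Type*} [TopologicalSpace X] (f : X → Vertex d)
    (h : ∀ u : Vertex d, IsOpen (f ⁻¹' {u})) :
    @Continuous X (Vertex d) _ ⊥ f := by
  rw [continuous_def]
  intro s _
  have hs : f ⁻¹' s = ⋃ u ∈ s, f ⁻¹' {u} := by
    ext x; simp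
  rw [hs]
  exact isOpen_biUnion fun u _ => h u

instance tautContinuousMul (d : ℕ) : ContinuousMul (TAut d) := by
  constructor
  · -- continuity of multiplication
    apply continuous_induced_rng.2
    apply @continuous_pi _ _ _ _ (fun _ => (⊥ : TopologicalSpace (Vertex d)))
    intro v
    apply continuous_into_vertex
      (f := fun p : TAut d × TAut d => ((p.1 * p.2 : TAut d) : Equiv.Perm (Vertex d)) v)
    intro u
    have h : (fun p : TAut d × TAut d =>
          ((p.1 * p.2 : TAut d) : Equiv.Perm (Vertex d)) v) ⁻¹' {u}
        = ⋃ w : Vertex d, ({g : TAut d | (g : Equiv.Perm (Vertex d)) w = u} ×ˢ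
            {h : TAut d | (h : Equiv.Perm (Vertex d)) v = w}) := by
      ext p
      simp only [Set.mem_preimage, Set.mem_singleton_iff, Set.mem_iUnion, Set.mem_prod,
        Set.mem_setOf_eq]
      constructor
      · intro hp
        exact ⟨(p.2 : Equiv.Perm (Vertex d)) v, hp, rfl⟩
      · rintro ⟨w, hw1, hw2⟩
        show (p.1 : Equiv.Perm (Vertex d)) ((p.2 : Equiv.Perm (Vertex d)) v) = u
        rw [hw2]; exact hw1
    rw [h]
    exact isOpen_iUnion fun w => (isOpen_eval d w u).prod (isOpen_eval d v w)

instance tautContinuousInv (d : ℕ) : ContinuousInv (TAut d) := by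
  constructor
  · -- continuity of inversion
    apply continuous_induced_rng.2
    apply @continuous_pi _ _ _ _ (fun _ => (⊥ : TopologicalSpace (Vertex d)))
    intro v
    apply continuous_into_vertex
      (f := fun g : TAut d => ((g⁻¹ : TAut d) : Equiv.Perm (Vertex d)) v)
    intro u
    have h : (fun g : TAut d => ((g⁻¹ : TAut d) : Equiv.Perm (Vertex d)) v) ⁻¹' {u}
        = {g : TAut d | (g : Equiv.Perm (Vertex d)) u = v} := by
      ext g
      simp only [Set.mem_preimage, Set.mem_singleton_iff, Set.mem_setOf_eq,
        InvMemClass.coe_inv]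
      constructor
      · intro hg; rw [← hg, (Equiv.Perm.eq_inv_iff_eq.mp rfl)]
      · intro hg; rw [← hg, (Equiv.Perm.inv_eq_iff_eq.mpr rfl)]
    rw [h]
    exact isOpen_eval d u v

instance tautTopologicalGroup (d : ℕ) : IsTopologicalGroup (TAut d) := ⟨⟩

/-- A subgroup of `Aut(T)` (viewed as a topological group with the congruence topology) is
topologically finitely generated if it contains a finitely generated dense subgroup. -/
def TopFG (H : Subgroup (TAut d)) : Prop :=
  ∃ S : Set ↥H, S.Finite ∧ Dense ((Subgroup.closure S : Subgroup ↥H) : Set ↥H)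

/-- A profinite group is just-infinite if it is infinite and every nontrivial closed normal
subgroup has finite index. -/
def JustInfinite (H : Subgroup (TAut d)) : Prop :=
  Infinite ↥H ∧ ∀ N : Subgroup ↥H, N.Normal → IsClosed (N : Set ↥H) → N ≠ ⊥ → N.index ≠ 0

/-- A profinite group is strongly complete if every subgroup of finite index is open. -/
def StronglyComplete (H : Subgroup (TAut d)) : Prop :=
  ∀ N : Subgroup ↥H, N.index ≠ 0 → IsOpen (N : Set ↥H)

end TreeFT

namespace TreeFT

open Filter

/-- The Hausdorff dimension of a (closed) subgroup `H ≤ Aut(T)`: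
`ℋ(H) = liminf_n log|π_n(H)| / log|π_n(Aut(T))|`. -/
noncomputable def hausdorffDim (d : ℕ) (H : Subgroup (TAut d)) : ℝ :=
  liminf (fun n : ℕ =>
    Real.log (Nat.card ↥(H.map (proj d n))) / Real.log (Nat.card (FAut d n))) atTop

/-- `St_P(D-1) = π_D(St_{G_P}(D-1))`. -/
def stP (d D : ℕ) (P : Subgroup (FAut d D)) : Subgroup (FAut d D) :=
  (gft d D P ⊓ lst d (D - 1)).map (proj d D)

end TreeFT


namespace TreeFT

variable {d : ℕ}

/-- Build a tree-automorphism function from a portrait. -/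
def portFun (p : Vertex d → Equiv.Perm (Fin d)) : Vertex d → Vertex d
  | [] => []
  | a :: w => p [] a :: portFun (fun v => p (a :: v)) w

@[simp] lemma portFun_nil (p : Vertex d → Equiv.Perm (Fin d)) : portFun p [] = [] := rfl

@[simp] lemma portFun_cons (p : Vertex d → Equiv.Perm (Fin d)) (a : Fin d) (w : Vertex d) :
    portFun p (a :: w) = p [] a :: portFun (fun v => p (a :: v)) w := rfl

lemma portFun_length (p : Vertex d → Equiv.Perm (Fin d)) (v : Vertex d) :
    (portFun p v).length = v.length := by
  induction v generalizing p with
  | nil => rfl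
  | cons a w ih => simp [ih]

lemma portFun_congr {p q : Vertex d → Equiv.Perm (Fin d)} (v : Vertex d)
    (h : ∀ u : Vertex d, u.length < v.length → p u = q u) : portFun p v = portFun q v := by
  induction v generalizing p q with
  | nil => rfl
  | cons a w ih =>
    simp only [portFun_cons]
    rw [h [] (by simp), ih (fun u hu => h (a :: u) (by simpa using Nat.succ_lt_succ hu))]

lemma portFun_append (p : Vertex d → Equiv.Perm (Fin d)) (v w : Vertex d) :
    portFun p (v ++ w) = portFun p v ++ portFun (fun u => p (v ++ u)) w := by
  induction v generalizing p with
  | nil => simp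
  | cons a v' ih => simp [ih]

lemma portFun_injective (p : Vertex d → Equiv.Perm (Fin d)) :
    Function.Injective (portFun p) := by
  intro v w h
  induction v generalizing p w with
  | nil =>
    have := congrArg List.length h
    simp only [portFun_length] at this
    exact (List.length_eq_zero_iff.mp this.symm).symm
  | cons a v' ih =>
    cases w with
    | nil =>
      have := congrArg List.length h
      simp [portFun_length] at this
    | cons b w' =>
      have hl := h
      simp only [portFun_cons, List.cons.injEq] at hl
      have hab : a = b := (p []).injective hl.1
      subst hab
      rw [ih _ hl.2]

lemma portFun_surjective (p : Vertex d → Equiv.Perm (Fin d)) :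
    Function.Surjective (portFun p) := by
  intro u
  induction u generalizing p with
  | nil => exact ⟨[], rfl⟩
  | cons b u' ih =>
    obtain ⟨w, hw⟩ := ih (fun v => p ((p [])⁻¹ b :: v))
    exact ⟨(p [])⁻¹ b :: w, by simpa using hw⟩

/-- The tree automorphism with portrait `p`. -/
noncomputable def portAut (p : Vertex d → Equiv.Perm (Fin d)) : TAut d :=
  ⟨Equiv.ofBijective (portFun p) ⟨portFun_injective p, portFun_surjective p⟩, by
    constructor
    · intro v; exact portFun_length p v
    · intro v w
      show (portFun p (v ++ w)).take v.length = portFun p v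
      rw [portFun_append]
      have : v.length = (portFun p v).length := (portFun_length p v).symm
      rw [this, List.take_left]⟩

@[simp] lemma portAut_apply (p : Vertex d → Equiv.Perm (Fin d)) (v : Vertex d) :
    ((portAut p : TAut d) : Equiv.Perm (Vertex d)) v = portFun p v := rfl

end TreeFT
namespace TreeFT

variable {d : ℕ}

lemma apply_nil (g : TAut d) : (g : Equiv.Perm (Vertex d)) [] = [] :=
  List.length_eq_zero_iff.mp (length_apply g [])

lemma apply_single' (g : TAut d) (a : Fin d) :
    (g : Equiv.Perm (Vertex d)) [a] = [((g : Equiv.Perm (Vertex d)) [a]).getD 0 a] := by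
  obtain ⟨b, hb⟩ := List.length_eq_one_iff.mp (length_apply g [a])
  simp [hb]

/-- The root permutation of a tree automorphism. -/
noncomputable def rootPerm (g : TAut d) : Equiv.Perm (Fin d) where
  toFun a := ((g : Equiv.Perm (Vertex d)) [a]).getD 0 a
  invFun a := (((g : Equiv.Perm (Vertex d)))⁻¹ [a]).getD 0 a
  left_inv := by
    intro a
    show (((g : Equiv.Perm (Vertex d)))⁻¹
        [((g : Equiv.Perm (Vertex d)) [a]).getD 0 a]).getD 0
        (((g : Equiv.Perm (Vertex d)) [a]).getD 0 a) = a
    rw [← apply_single' g a, (Equiv.Perm.inv_eq_iff_eq.mpr rfl)]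
    rfl
  right_inv := by
    intro a
    have h1 : ((g : Equiv.Perm (Vertex d)))⁻¹ [a]
        = [(((g : Equiv.Perm (Vertex d)))⁻¹ [a]).getD 0 a] := by
      have := apply_single' g⁻¹ a
      simpa using this
    show ((g : Equiv.Perm (Vertex d))
        [(((g : Equiv.Perm (Vertex d)))⁻¹ [a]).getD 0 a]).getD 0
        ((((g : Equiv.Perm (Vertex d)))⁻¹ [a]).getD 0 a) = a
    rw [← h1, (Equiv.Perm.eq_inv_iff_eq.mp rfl)]
    rfl

lemma apply_single (g : TAut d) (a : Fin d) :
    (g : Equiv.Perm (Vertex d)) [a] = [rootPerm g a] := apply_single' g a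

@[simp] lemma rootPerm_one : rootPerm (1 : TAut d) = 1 := by
  refine Equiv.ext fun a => ?_
  show (((1 : TAut d) : Equiv.Perm (Vertex d)) [a]).getD 0 a = a
  rfl

/-- The portrait of a tree automorphism. -/
noncomputable def portrait (g : TAut d) (v : Vertex d) : Equiv.Perm (Fin d) :=
  rootPerm (sect g v)

lemma sect_nil (g : TAut d) : sect g [] = g := by
  apply Subtype.ext; apply Equiv.ext; intro w
  simp [sect_apply]

lemma sect_sect (g : TAut d) (u w : Vertex d) : sect (sect g u) w = sect g (u ++ w) := by
  apply Subtype.ext; apply Equiv.ext; intro x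
  simp only [sect_apply, List.append_assoc, List.length_append]
  rw [List.drop_drop]

lemma portrait_sect (g : TAut d) (u w : Vertex d) :
    portrait (sect g u) w = portrait g (u ++ w) := by
  rw [portrait, sect_sect]; rfl

@[simp] lemma portrait_one (v : Vertex d) : portrait (1 : TAut d) v = 1 := by
  rw [portrait, sect_one, rootPerm_one]

lemma apply_cons (g : TAut d) (v : Vertex d) (a : Fin d) :
    (g : Equiv.Perm (Vertex d)) (v ++ [a])
      = (g : Equiv.Perm (Vertex d)) v ++ [portrait g v a] := by
  have h := apply_append g v [a]
  rw [h]
  congr 1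
  have : ((g : Equiv.Perm (Vertex d)) (v ++ [a])).drop v.length
      = ((sect g v : TAut d) : Equiv.Perm (Vertex d)) [a] := rfl
  rw [this, apply_single]
  rfl

lemma reconstruct (v : Vertex d) (g : TAut d) :
    (g : Equiv.Perm (Vertex d)) v = portFun (portrait g) v := by
  induction v generalizing g with
  | nil => simp [apply_nil]
  | cons a w ih =>
    have h1 : (a :: w : Vertex d) = [a] ++ w := rfl
    rw [h1, apply_append g [a] w, apply_single]
    have h2 : ((g : Equiv.Perm (Vertex d)) ([a] ++ w)).drop [a].length
        = ((sect g [a] : TAut d) : Equiv.Perm (Vertex d)) w := rfl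
    rw [h2, ih (sect g [a])]
    simp only [portFun_cons, List.singleton_append, List.cons.injEq]
    constructor
    · show rootPerm g a = portrait g [] a
      rw [portrait, sect_nil]
    · exact portFun_congr w (fun u _ => by rw [portrait_sect]; rfl)

lemma portrait_injective : Function.Injective (portrait (d := d)) := by
  intro g h hgh
  apply Subtype.ext; apply Equiv.ext; intro v
  rw [reconstruct v g, reconstruct v h, hgh]

lemma portrait_portAut (p : Vertex d → Equiv.Perm (Fin d)) : portrait (portAut p) = p := by
  funext v
  refine Equiv.ext fun a => ?_
  have h1 : ((portAut p : TAut d) : Equiv.Perm (Vertex d)) (v ++ [a])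
      = ((portAut p : TAut d) : Equiv.Perm (Vertex d)) v ++ [portrait (portAut p) v a] :=
    apply_cons _ v a
  rw [portAut_apply, portAut_apply, portFun_append] at h1
  have h2 := List.append_cancel_left h1
  have h3 : portFun (fun u => p (v ++ u)) [a] = [p v a] := by
    simp
  rw [h3] at h2
  injection h2 with h4 _
  exact h4.symm

lemma portAut_portrait (g : TAut d) : portAut (portrait g) = g :=
  portrait_injective (by rw [portrait_portAut])

lemma sect_portAut (p : Vertex d → Equiv.Perm (Fin d)) (u : Vertex d) :
    sect (portAut p) u = portAut (fun w => p (u ++ w)) := by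
  apply portrait_injective
  funext w
  rw [portrait_sect, portrait_portAut, portrait_portAut]

end TreeFT
namespace TreeFT

variable {d : ℕ}

lemma agree_iff (g h : TAut d) (N : ℕ) :
    (∀ v : Vertex d, v.length ≤ N →
        (g : Equiv.Perm (Vertex d)) v = (h : Equiv.Perm (Vertex d)) v) ↔
    (∀ v : Vertex d, v.length < N → portrait g v = portrait h v) := by
  constructor
  · intro H v hv
    refine Equiv.ext fun a => ?_
    have h1 := apply_cons g v a
    have h2 := apply_cons h v a
    rw [H v hv.le] at h1
    rw [H (v ++ [a]) (by simpa using hv)] at h1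
    rw [h1] at h2
    have := List.append_cancel_left h2
    injection this with h3 _
  · intro H v hv
    rw [reconstruct v g, reconstruct v h]
    exact portFun_congr v (fun u hu => H u (lt_of_lt_of_le hu hv))

lemma proj_eq_iff {N : ℕ} {g h : TAut d} :
    proj d N g = proj d N h ↔
      ∀ v : Vertex d, v.length < N → portrait g v = portrait h v := by
  rw [← agree_iff]
  constructor
  · intro H v hv
    have h1 : g⁻¹ * h ∈ lst d N := by
      have := QuotientGroup.eq.mp H
      simpa using this
    have h2 := h1 v hv
    have h3 : ((g⁻¹ * h : TAut d) : Equiv.Perm (Vertex d)) v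
        = ((g : Equiv.Perm (Vertex d)))⁻¹ ((h : Equiv.Perm (Vertex d)) v) := by
      simp [Equiv.Perm.mul_apply]
    rw [h3] at h2
    have := congrArg (g : Equiv.Perm (Vertex d)) h2
    rw [(Equiv.Perm.eq_inv_iff_eq.mp rfl)] at this
    exact this.symm
  · intro H
    apply (QuotientGroup.eq (s := lst d N)).mpr
    intro v hv
    have h3 : ((g⁻¹ * h : TAut d) : Equiv.Perm (Vertex d)) v
        = ((g : Equiv.Perm (Vertex d)))⁻¹ ((h : Equiv.Perm (Vertex d)) v) := by
      simp [Equiv.Perm.mul_apply]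
    rw [h3, ← H v hv, (Equiv.Perm.inv_eq_iff_eq.mpr rfl)]

lemma proj_eq_one_iff {N : ℕ} {g : TAut d} : proj d N g = 1 ↔ g ∈ lst d N :=
  QuotientGroup.eq_one_iff g

lemma mem_lst_iff_portrait {N : ℕ} {g : TAut d} :
    g ∈ lst d N ↔ ∀ v : Vertex d, v.length < N → portrait g v = 1 := by
  have := proj_eq_iff (N := N) (g := g) (h := 1)
  simp only [portrait_one, map_one] at this
  rw [← proj_eq_one_iff, this]

end TreeFT
namespace TreeFT

variable {d : ℕ}

instance fintypeLevel (m : ℕ) : Fintype {v : Vertex d // v.length = m} :=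
  inferInstanceAs (Fintype (List.Vector (Fin d) m))

/-- Vertices of level `< n` as a sigma type. -/
def belowEquiv (n : ℕ) :
    {v : Vertex d // v.length < n} ≃ Σ i : Fin n, {v : Vertex d // v.length = (i : ℕ)} where
  toFun x := ⟨⟨x.1.length, x.2⟩, ⟨x.1, rfl⟩⟩
  invFun x := ⟨x.2.1, by rw [x.2.2]; exact x.1.2⟩
  left_inv := by rintro ⟨v, hv⟩; rfl
  right_inv := by
    rintro ⟨⟨i, hi⟩, l, hl⟩
    have hl' : l.length = i := hl
    refine Sigma.ext (Fin.ext ?_) ((Subtype.heq_iff_coe_eq ?_).mpr rfl)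
    · exact hl'
    · intro x
      show x.length = l.length ↔ x.length = i
      rw [hl']

instance fintypeBelow (n : ℕ) : Fintype {v : Vertex d // v.length < n} :=
  Fintype.ofEquiv _ (belowEquiv n).symm

lemma card_level (m : ℕ) : Nat.card {v : Vertex d // v.length = m} = d ^ m := by
  rw [Nat.card_eq_fintype_card]
  have : Fintype.card {v : Vertex d // v.length = m}
      = Fintype.card (List.Vector (Fin d) m) := rfl
  rw [this, card_vector, Fintype.card_fin]

lemma card_below (n : ℕ) :
    Nat.card {v : Vertex d // v.length < n} = ∑ i ∈ Finset.range n, d ^ i := by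
  rw [Nat.card_congr (belowEquiv n), Nat.card_eq_fintype_card, Fintype.card_sigma,
    ← Fin.sum_univ_eq_sum_range (fun i => d ^ i) n]
  congr 1
  funext i
  rw [← Nat.card_eq_fintype_card, card_level]

/-- The truncation bijection: `Aut(T^n)` is equivalent to portraits of depth `n`. -/
noncomputable def truncEquiv (d n : ℕ) :
    FAut d n ≃ ({v : Vertex d // v.length < n} → Equiv.Perm (Fin d)) where
  toFun x v := portrait (Quotient.out x) v.1
  invFun q := proj d n (portAut (fun v => if h : v.length < n then q ⟨v, h⟩ else 1))
  left_inv := by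
    intro x
    show proj d n (portAut fun v => if h : v.length < n
        then portrait (Quotient.out x) v else 1) = x
    conv_rhs => rw [← QuotientGroup.out_eq' x]
    apply proj_eq_iff.mpr
    intro v hv
    rw [portrait_portAut]
    simp [hv]
  right_inv := by
    intro q
    funext v
    set p := fun v : Vertex d => if h : v.length < n then q ⟨v, h⟩ else 1 with hp
    show portrait (Quotient.out (proj d n (portAut p))) v.1 = q v
    have h1 : proj d n (Quotient.out (proj d n (portAut p))) = proj d n (portAut p) :=
      QuotientGroup.out_eq' _
    have h2 := proj_eq_iff.mp h1 v.1 v.2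
    rw [h2, portrait_portAut]
    simp [hp, v.2]

instance finiteFAut (d n : ℕ) : Finite (FAut d n) :=
  Finite.of_equiv _ (truncEquiv d n).symm

lemma card_FAut (d n : ℕ) :
    Nat.card (FAut d n) = (Nat.factorial d) ^ (∑ i ∈ Finset.range n, d ^ i) := by
  rw [Nat.card_congr (truncEquiv d n), Nat.card_fun, card_below]
  congr 1
  rw [Nat.card_eq_fintype_card, Fintype.card_perm, Fintype.card_fin]

end TreeFT
namespace TreeFT

variable {d : ℕ}

lemma sect_mem_gft {D : ℕ} {P : Subgroup (FAut d D)} {g : TAut d}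
    (hg : g ∈ gft d D P) (v : Vertex d) : sect g v ∈ gft d D P := by
  intro u
  rw [sect_sect]
  exact hg (v ++ u)

lemma sect_mem_lst {n : ℕ} {g : TAut d} (hg : g ∈ lst d n) (v : Vertex d) :
    sect g v ∈ lst d (n - v.length) := by
  intro w hw
  by_cases hvn : v.length ≤ n
  · have h1 : (v ++ w).length ≤ n := by simp; omega
    rw [sect_apply, hg (v ++ w) h1, List.drop_left]
  · have hw0 : w.length = 0 := by omega
    rw [List.length_eq_zero_iff.mp hw0]
    exact apply_nil _

lemma proj_sect_congr {g h : TAut d} {m D : ℕ} (H : proj d (m + D) g = proj d (m + D) h)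
    (v : Vertex d) (hv : v.length = m) : proj d D (sect g v) = proj d D (sect h v) := by
  apply proj_eq_iff.mpr; intro w hw
  rw [portrait_sect, portrait_sect]
  exact proj_eq_iff.mp H (v ++ w) (by simp [hv]; omega)

lemma proj_of_sections {g h : TAut d} {m D : ℕ} (hD : 1 ≤ D)
    (hg : g ∈ lst d (m + D - 1)) (hh : h ∈ lst d (m + D - 1))
    (H : ∀ v : Vertex d, v.length = m → proj d D (sect g v) = proj d D (sect h v)) :
    proj d (m + D) g = proj d (m + D) h := by
  apply proj_eq_iff.mpr; intro v hv
  by_cases hm : v.length < m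
  · rw [mem_lst_iff_portrait] at hg hh
    rw [hg v (by omega), hh v (by omega)]
  · push_neg at hm
    have h2 : (v.take m).length = m := by rw [List.length_take]; omega
    have h3 := proj_eq_iff.mp (H (v.take m) h2) (v.drop m) (by rw [List.length_drop]; omega)
    rw [portrait_sect, portrait_sect, List.take_append_drop] at h3
    exact h3

lemma exists_glue {D : ℕ} {P : Subgroup (FAut d D)} (hD : 1 ≤ D) (m : ℕ)
    (t : {v : Vertex d // v.length = m} → ↥(stP d D P)) :
    ∃ g, (g ∈ gft d D P ∧ g ∈ lst d (m + D - 1)) ∧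
      ∀ (v : Vertex d) (hv : v.length = m), proj d D (sect g v) = (t ⟨v, hv⟩ : FAut d D) := by
  have hchoice : ∀ v : {v : Vertex d // v.length = m},
      ∃ k : TAut d, (k ∈ gft d D P ∧ k ∈ lst d (D - 1)) ∧ proj d D k = (t v : FAut d D) := by
    intro v
    obtain ⟨k, hk, hk2⟩ := Subgroup.mem_map.mp (t v).2
    exact ⟨k, Subgroup.mem_inf.mp hk, hk2⟩
  choose K hK1 hK2 using hchoice
  have hvv : ∀ u : Vertex d, m ≤ u.length → (u.take m).length = m := by
    intro u h; rw [List.length_take]; omega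
  set p : Vertex d → Equiv.Perm (Fin d) := fun u =>
    if h : m ≤ u.length then portrait (K ⟨u.take m, hvv u h⟩) (u.drop m) else 1 with hp
  have hsect : ∀ (u : Vertex d) (h : m ≤ u.length),
      sect (portAut p) u = sect (K ⟨u.take m, hvv u h⟩) (u.drop m) := by
    intro u h
    have step : sect (portAut p) u
        = sect (portAut (portrait (K ⟨u.take m, hvv u h⟩))) (u.drop m) := by
      rw [sect_portAut, sect_portAut]
      congr 1
      funext w
      have h1 : m ≤ (u ++ w).length := by simp; omega
      have h2 : (u ++ w).take m = u.take m := List.take_append_of_le_length h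
      have h3 : (u ++ w).drop m = u.drop m ++ w := List.drop_append_of_le_length h
      show p (u ++ w) = portrait (K ⟨u.take m, hvv u h⟩) (u.drop m ++ w)
      have e1 : ∀ pf : ((u ++ w).take m).length = m,
          (⟨(u ++ w).take m, pf⟩ : {v : Vertex d // v.length = m}) = ⟨u.take m, hvv u h⟩ :=
        fun _ => Subtype.ext h2
      rw [hp]
      simp only [h1, dif_pos, e1, h3]
    rw [portAut_portrait] at step
    exact step
  refine ⟨portAut p, ⟨?_, ?_⟩, ?_⟩
  · -- portAut p ∈ gft
    intro u
    by_cases h : m ≤ u.length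
    · rw [hsect u h]
      exact (hK1 _).1 (u.drop m)
    · have : proj d D (sect (portAut p) u) = 1 := by
        apply proj_eq_one_iff.mpr
        apply mem_lst_iff_portrait.mpr
        intro w hw
        rw [portrait_sect, portrait_portAut, hp]
        by_cases h2 : m ≤ (u ++ w).length
        · simp only [h2, dif_pos]
          have hKl := (hK1 ⟨(u ++ w).take m, hvv _ h2⟩).2
          rw [mem_lst_iff_portrait] at hKl
          apply hKl
          rw [List.length_append] at h2
          rw [List.length_drop, List.length_append]
          omega
        · simp only [dif_neg h2]
      rw [this]
      exact one_mem P
  · -- portAut p ∈ lst d (m + D - 1)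
    apply mem_lst_iff_portrait.mpr
    intro u hu
    rw [portrait_portAut, hp]
    by_cases h : m ≤ u.length
    · simp only [h, dif_pos]
      have hKl := (hK1 ⟨u.take m, hvv u h⟩).2
      rw [mem_lst_iff_portrait] at hKl
      apply hKl
      rw [List.length_drop]
      omega
    · simp [h]
  · -- sections at level m
    intro v hv
    have h : m ≤ v.length := hv.ge
    rw [hsect v h]
    have h1 : v.take m = v := List.take_of_length_le hv.le
    have h2 : v.drop m = [] := List.drop_eq_nil_of_le hv.le
    have h3 : (⟨v.take m, hvv v h⟩ : {v : Vertex d // v.length = m}) = ⟨v, hv⟩ :=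
      Subtype.ext h1
    rw [h2, sect_nil, h3]
    exact hK2 ⟨v, hv⟩

end TreeFT
namespace TreeFT

variable {d : ℕ}

lemma card_ker {D : ℕ} (P : Subgroup (FAut d D)) (hD : 1 ≤ D) (m : ℕ) :
    Nat.card ↥((gft d D P ⊓ lst d (m + D - 1)).map (proj d (m + D)))
      = Nat.card ↥(stP d D P) ^ (d ^ m) := by
  set W := (gft d D P ⊓ lst d (m + D - 1)).map (proj d (m + D)) with hW
  have hmem : ∀ x : ↥W, ∃ g : TAut d,
      (g ∈ gft d D P ∧ g ∈ lst d (m + D - 1)) ∧ proj d (m + D) g = ↑x := by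
    intro x
    obtain ⟨g, hg, h2⟩ := Subgroup.mem_map.mp x.2
    exact ⟨g, Subgroup.mem_inf.mp hg, h2⟩
  choose rep hrep1 hrep2 using hmem
  have hstp : ∀ (x : ↥W) (v : {v : Vertex d // v.length = m}),
      proj d D (sect (rep x) v.1) ∈ stP d D P := by
    intro x v
    refine Subgroup.mem_map.mpr ⟨sect (rep x) v.1, Subgroup.mem_inf.mpr ⟨?_, ?_⟩, rfl⟩
    · exact sect_mem_gft (hrep1 x).1 _
    · have h1 := sect_mem_lst (hrep1 x).2 v.1
      have h2 : m + D - 1 - v.1.length = D - 1 := by rw [v.2]; omega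
      rwa [h2] at h1
  set B : ↥W → ({v : Vertex d // v.length = m} → ↥(stP d D P)) :=
    fun x v => ⟨proj d D (sect (rep x) v.1), hstp x v⟩ with hB
  have hbij : Function.Bijective B := by
    constructor
    · intro x y hxy
      apply Subtype.ext
      rw [← hrep2 x, ← hrep2 y]
      apply proj_of_sections hD (hrep1 x).2 (hrep1 y).2
      intro v hv
      have := congrFun hxy ⟨v, hv⟩
      exact Subtype.ext_iff.mp this
    · intro t
      obtain ⟨g, hg, hgt⟩ := exists_glue hD m t
      refine ⟨⟨proj d (m + D) g, Subgroup.mem_map.mpr ⟨g, Subgroup.mem_inf.mpr hg, rfl⟩⟩, ?_⟩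
      funext v
      apply Subtype.ext
      set x₀ : ↥W := ⟨proj d (m + D) g, Subgroup.mem_map.mpr ⟨g, Subgroup.mem_inf.mpr hg, rfl⟩⟩
      show proj d D (sect (rep x₀) v.1) = ↑(t v)
      have hx : proj d (m + D) (rep x₀) = proj d (m + D) g := hrep2 x₀
      rw [proj_sect_congr hx v.1 v.2]
      have := hgt v.1 v.2
      rw [this]
  rw [Nat.card_eq_of_bijective B hbij, Nat.card_fun, card_level]

end TreeFT
namespace TreeFT

variable {d : ℕ}

lemma lst_antitone {n k : ℕ} (h : n ≤ k) : lst d k ≤ lst d n :=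
  fun _ hg v hv => hg v (hv.trans h)

/-- The natural projection `Aut(T^{n+1}) → Aut(T^n)`. -/
noncomputable def projStep (d n : ℕ) : FAut d (n + 1) →* FAut d n :=
  QuotientGroup.lift (lst d (n + 1)) (proj d n)
    (fun _ hg => proj_eq_one_iff.mpr (lst_antitone (Nat.le_succ n) hg))

lemma projStep_proj (n : ℕ) (g : TAut d) :
    projStep d n (proj d (n + 1) g) = proj d n g := rfl

lemma card_step_aux {K : ℕ} (P : Subgroup (FAut d (K + 1))) (m : ℕ) :
    Nat.card ↥((gft d (K + 1) P).map (proj d (m + K + 1)))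
      = Nat.card ↥((gft d (K + 1) P).map (proj d (m + K)))
          * Nat.card ↥(stP d (K + 1) P) ^ d ^ m := by
  set A := (gft d (K + 1) P).map (proj d (m + K + 1)) with hA
  set W := (gft d (K + 1) P ⊓ lst d (m + K)).map (proj d (m + K + 1)) with hWdef
  set f : ↥A →* FAut d (m + K) := (projStep d (m + K)).comp A.subtype with hf
  have hrange : f.range = (gft d (K + 1) P).map (proj d (m + K)) := by
    rw [hf, MonoidHom.range_comp, Subgroup.range_subtype, hA, Subgroup.map_map]
    have he : (projStep d (m + K)).comp (proj d (m + K + 1)) = proj d (m + K) :=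
      MonoidHom.ext fun g => projStep_proj (m + K) g
    rw [he]
  have hker : f.ker = W.comap A.subtype := by
    ext x
    simp only [MonoidHom.mem_ker, Subgroup.mem_comap]
    constructor
    · intro hx
      obtain ⟨g, hg, hgx⟩ := Subgroup.mem_map.mp x.2
      have h1 : projStep d (m + K) ↑x = proj d (m + K) g := by rw [← hgx]; rfl
      rw [hf] at hx
      have h2 : proj d (m + K) g = 1 := by rw [← h1]; exact hx
      have h3 : g ∈ lst d (m + K) := proj_eq_one_iff.mp h2
      exact Subgroup.mem_map.mpr ⟨g, Subgroup.mem_inf.mpr ⟨hg, h3⟩, hgx⟩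
    · intro hx
      obtain ⟨g, hg, hgx⟩ := Subgroup.mem_map.mp hx
      show projStep d (m + K) (A.subtype x) = 1
      rw [← hgx, projStep_proj]
      exact proj_eq_one_iff.mpr (Subgroup.mem_inf.mp hg).2
  have hWA : W ≤ A := Subgroup.map_mono inf_le_left
  have hcardker : Nat.card ↥f.ker = Nat.card ↥W := by
    rw [hker]
    exact Nat.card_congr (Subgroup.subgroupOfEquivOfLe hWA).toEquiv
  have hcardrange : Nat.card ↥f.range
      = Nat.card ↥((gft d (K + 1) P).map (proj d (m + K))) := by
    rw [hrange]
  have hmain : Nat.card ↥A = Nat.card ↥f.range * Nat.card ↥f.ker := by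
    rw [Subgroup.card_eq_card_quotient_mul_card_subgroup f.ker]
    congr 1
    exact Nat.card_congr (QuotientGroup.quotientKerEquivRange f).toEquiv
  have hWcard : Nat.card ↥W = Nat.card ↥(stP d (K + 1) P) ^ d ^ m :=
    card_ker P (by omega) m
  rw [hmain, hcardrange, hcardker, hWcard]

lemma card_step {D : ℕ} (P : Subgroup (FAut d D)) (hD : 1 ≤ D) {n : ℕ} (hn : D ≤ n) :
    Nat.card ↥((gft d D P).map (proj d (n + 1)))
      = Nat.card ↥((gft d D P).map (proj d n))
          * Nat.card ↥(stP d D P) ^ d ^ (n + 1 - D) := by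
  obtain ⟨K, rfl⟩ : ∃ K, D = K + 1 := ⟨D - 1, by omega⟩
  obtain ⟨m, rfl⟩ : ∃ m, n = m + K := ⟨n - K, by omega⟩
  rw [show m + K + 1 - (K + 1) = m from by omega]
  exact card_step_aux P m

lemma card_proj {D : ℕ} (P : Subgroup (FAut d D)) (hD : 1 ≤ D)
    (hmin : IsMinimalPattern d D P) :
    ∀ n : ℕ, D ≤ n → Nat.card ↥((gft d D P).map (proj d n))
      = Nat.card ↥P * Nat.card ↥(stP d D P) ^ (∑ i ∈ Finset.Icc 1 (n - D), d ^ i) := by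
  intro n hn
  induction n, hn using Nat.le_induction with
  | base =>
    rw [Nat.sub_self]
    rw [show Finset.Icc 1 0 = ∅ from Finset.Icc_eq_empty (by omega)]
    rw [Finset.sum_empty, pow_zero, mul_one, hmin]
  | succ n hn ih =>
    rw [card_step P hD hn, ih, mul_assoc, ← pow_add]
    congr 2
    have e1 : n + 1 - D = (n - D) + 1 := by omega
    rw [e1, Finset.sum_Icc_succ_top (by omega : 1 ≤ n - D + 1)]

end TreeFT
namespace TreeFT

variable {d : ℕ}

lemma vertex_eq_of_length {u w : Vertex d} (hd : d ≤ 1) (h : u.length = w.length) : u = w := by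
  haveI : Subsingleton (Fin d) := ⟨fun a b => Fin.ext (by omega)⟩
  induction u generalizing w with
  | nil => exact (List.length_eq_zero_iff.mp h.symm).symm
  | cons a u' ih =>
    cases w with
    | nil => simp at h
    | cons b w' =>
      simp only [List.length_cons, Nat.succ.injEq] at h
      rw [Subsingleton.elim a b, ih h]

lemma subsingleton_TAut (hd : d ≤ 1) : Subsingleton (TAut d) := by
  constructor
  intro g h
  apply Subtype.ext; apply Equiv.ext; intro v
  have h1 : ((g : Equiv.Perm (Vertex d)) v).length = ((h : Equiv.Perm (Vertex d)) v).length := by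
    rw [length_apply, length_apply]
  exact vertex_eq_of_length hd h1

lemma subsingleton_FAut (hd : d ≤ 1) (n : ℕ) : Subsingleton (FAut d n) := by
  haveI := subsingleton_TAut (d := d) hd
  constructor
  intro a b
  obtain ⟨x, rfl⟩ := proj_surjective d n a
  obtain ⟨y, rfl⟩ := proj_surjective d n b
  rw [Subsingleton.elim x y]

lemma geom_Icc (x : ℝ) (hx : x ≠ 1) (m : ℕ) :
    ∑ i ∈ Finset.Icc 1 m, x ^ i = (x ^ (m + 1) - x) / (x - 1) := by
  have hx1 : x - 1 ≠ 0 := fun h => hx (by linarith)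
  induction m with
  | zero =>
    rw [show Finset.Icc 1 0 = ∅ from Finset.Icc_eq_empty (by omega), Finset.sum_empty]
    field_simp
    ring
  | succ m ih =>
    rw [Finset.sum_Icc_succ_top (by omega : 1 ≤ m + 1), ih]
    field_simp
    ring

end TreeFT
namespace TreeFT

open Filter

variable {d : ℕ}

lemma dim_eq {D : ℕ} (P : Subgroup (FAut d D)) (hD : 1 ≤ D)
    (hmin : IsMinimalPattern d D P) :
    hausdorffDim d (gft d D P)
      = (1 / (d : ℝ) ^ (D - 1)) *
          (Real.log (Nat.card ↥(stP d D P)) / Real.log (Nat.factorial d)) := by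
  by_cases hd : d ≤ 1
  · -- degenerate case
    haveI hss : ∀ n, Subsingleton (FAut d n) := subsingleton_FAut hd
    have hcard1 : ∀ (n : ℕ) (H : Subgroup (FAut d n)), Nat.card ↥H = 1 := by
      intro n H
      haveI : Subsingleton ↥H := inferInstance
      exact Nat.card_eq_one_iff_unique.mpr ⟨inferInstance, ⟨1⟩⟩
    have h1 : (fun n : ℕ => Real.log (Nat.card ↥((gft d D P).map (proj d n)))
        / Real.log (Nat.card (FAut d n))) = fun _ => (0 : ℝ) := by
      funext n
      rw [hcard1 n _, Nat.cast_one, Real.log_one, zero_div]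
    rw [hausdorffDim, h1, liminf_const, hcard1 D _, Nat.cast_one, Real.log_one,
      zero_div, mul_zero]
  · -- main case
    push_neg at hd
    have hd2 : 2 ≤ d := hd
    set x : ℝ := (d : ℝ) with hxdef
    have hx1 : (1 : ℝ) < x := by rw [hxdef]; exact_mod_cast Nat.lt_of_lt_of_le Nat.one_lt_two hd2
    have hx0 : (0 : ℝ) < x := lt_trans one_pos hx1
    have hxne : x ≠ 0 := ne_of_gt hx0
    have hx1ne : x - 1 ≠ 0 := by linarith
    have hfac2 : (2 : ℕ) ≤ d.factorial := by
      calc (2 : ℕ) = Nat.factorial 2 := rfl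
      _ ≤ d.factorial := Nat.factorial_le hd2
    have hfac1 : (1 : ℝ) < (d.factorial : ℝ) := by exact_mod_cast Nat.lt_of_lt_of_le Nat.one_lt_two hfac2
    have hlogfac : (0 : ℝ) < Real.log (d.factorial) := Real.log_pos hfac1
    set p₀ := Nat.card ↥P with hp₀def
    set s := Nat.card ↥(stP d D P) with hsdef
    haveI : Finite (FAut d D) := finiteFAut d D
    have hp₀ : 0 < p₀ := Nat.card_pos
    have hs : 0 < s := Nat.card_pos
    set u : ℕ → ℝ := fun n => (x⁻¹) ^ n with hudef
    have hu : Tendsto u atTop (nhds 0) := by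
      apply tendsto_pow_atTop_nhds_zero_of_lt_one (by positivity)
      exact inv_lt_one_of_one_lt₀ hx1
    set A : ℕ → ℝ := fun n =>
      Real.log p₀ * ((x - 1) * u n) + ((x ^ (D - 1))⁻¹ - x * u n) * Real.log s with hAdef
    set B : ℕ → ℝ := fun n => (1 - u n) * Real.log (d.factorial) with hBdef
    have hA : Tendsto A atTop
        (nhds (Real.log p₀ * ((x - 1) * 0) + ((x ^ (D - 1))⁻¹ - x * 0) * Real.log s)) := by
      exact (((hu.const_mul (x - 1)).const_mul (Real.log p₀)).add
        ((tendsto_const_nhds.sub (hu.const_mul x)).mul_const (Real.log s)))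
    have hB : Tendsto B atTop (nhds ((1 - 0) * Real.log (d.factorial))) :=
      (tendsto_const_nhds.sub hu).mul_const _
    have hBne : ((1 : ℝ) - 0) * Real.log (d.factorial) ≠ 0 := by
      rw [sub_zero, one_mul]; exact ne_of_gt hlogfac
    have hdiv := hA.div hB hBne
    -- eventual equality with the Hausdorff dimension sequence
    have hAB : ∀ n : ℕ, D ≤ n →
        Real.log (Nat.card ↥((gft d D P).map (proj d n))) / Real.log (Nat.card (FAut d n))
          = A n / B n := by
      intro n hn
      obtain ⟨k, rfl⟩ : ∃ k, n = D + k := ⟨n - D, by omega⟩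
      rw [card_proj P hD hmin _ hn, card_FAut]
      rw [show D + k - D = k from by omega]
      push_cast
      rw [Real.log_mul (by positivity) (by positivity), Real.log_pow, Real.log_pow]
      push_cast
      rw [← hxdef]
      rw [geom_Icc x hx1.ne' k, geom_sum_eq hx1.ne']
      have hxn1 : (1 : ℝ) < x ^ (D + k) := one_lt_pow₀ hx1 (by omega)
      have hden : ((x ^ (D + k) - 1) / (x - 1)) * Real.log (d.factorial) ≠ 0 := by
        apply mul_ne_zero (div_ne_zero (by linarith) hx1ne) (ne_of_gt hlogfac)
      have hun : u (D + k) < 1 := by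
        rw [hudef]
        exact pow_lt_one₀ (by positivity) (inv_lt_one_of_one_lt₀ hx1) (by omega)
      have hBn : B (D + k) ≠ 0 := by
        have hB0 : B (D + k) = (1 - u (D + k)) * Real.log (d.factorial) := rfl
        rw [hB0]
        exact mul_ne_zero (by linarith) (ne_of_gt hlogfac)
      rw [div_eq_div_iff hden hBn]
      rw [hAdef, hBdef, hudef]
      simp only []
      rw [inv_pow]
      have hxDk : x ^ (D + k) ≠ 0 := by positivity
      have hxD1 : x ^ (D - 1) ≠ 0 := by positivity
      obtain ⟨K, rfl⟩ : ∃ K, D = K + 1 := ⟨D - 1, by omega⟩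
      rw [show K + 1 - 1 = K from rfl]
      field_simp
      ring
    have hfinal : Tendsto (fun n : ℕ =>
        Real.log (Nat.card ↥((gft d D P).map (proj d n))) / Real.log (Nat.card (FAut d n)))
        atTop (nhds ((Real.log p₀ * ((x - 1) * 0) + ((x ^ (D - 1))⁻¹ - x * 0) * Real.log s)
          / ((1 - 0) * Real.log (d.factorial)))) := by
      apply hdiv.congr'
      filter_upwards [eventually_ge_atTop D] with n hn
      exact (hAB n hn).symm
    rw [hausdorffDim, hfinal.liminf_eq]
    simp only [mul_zero, sub_zero, zero_add, one_mul, one_div, mul_div_assoc]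

end TreeFT

namespace TreeFT

/-- Let `P ≤ Aut(T^D)` be a minimal pattern subgroup with group of finite
type `G_P`.  Then `|π_n(G_P)| = |P|·|St_P(D−1)|^{d + d² + ⋯ + d^{n−D}}` for all `n ≥ D`, and
consequently `ℋ(G_P) = (1/d^{D−1})·log|St_P(D−1)|/log(d!)`. -/
theorem statement_12 (d D : ℕ) (hD : 1 ≤ D) (P : Subgroup (FAut d D))
    (hmin : IsMinimalPattern d D P) :
    (∀ n : ℕ, D ≤ n →
      Nat.card ↥((gft d D P).map (proj d n))
        = Nat.card ↥P * Nat.card ↥(stP d D P) ^ (∑ i ∈ Finset.Icc 1 (n - D), d ^ i)) ∧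
    hausdorffDim d (gft d D P)
      = (1 / (d : ℝ) ^ (D - 1)) *
          (Real.log (Nat.card ↥(stP d D P)) / Real.log (Nat.factorial d)) :=
  ⟨card_proj P hD hmin, dim_eq P hD hmin⟩

end TreeFT
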